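/- A click allocation c_1 ≥ c_2 ≥ ... ≥ c_k (nonnegative reals) can be feasibly scheduled on slots with click rates D_1 > D_2 > ... > D_k if and only if for every ℓ ∈ {1,...,k}, c_1 + ... + c_ℓ ≤ D_1 + ... + D_ℓ. -/

import Mathlib

/-- Feasibility of a click allocation via a fractional (preemptive) schedule:
`x i j` is the fraction of the time interval `[0,1]` during which bidder `i`
occupies slot `j`; no bidder is in two slots at once and no slot holds two
bidders at once, and bidder `i` receives `∑ j, x i j * D j` clicks. -/
def FeasibleAllocation {k : ℕ} (D c : Fin k → ℝ) : Prop :=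
  ∃ x : Fin k → Fin k → ℝ,
    (∀ i j, 0 ≤ x i j) ∧
    (∀ i, ∑ j, x i j ≤ 1) ∧
    (∀ j, ∑ i, x i j ≤ 1) ∧
    (∀ i, c i = ∑ j, x i j * D j)


open Finset

private lemma sum_range_add' (f : ℕ → ℝ) (a b : ℕ) :
    ∑ j ∈ range (a + b), f j = (∑ j ∈ range a, f j) + ∑ j ∈ range b, f (a + j) := by
  induction b with
  | zero => simp
  | succ b ih => rw [← Nat.add_assoc, sum_range_succ, sum_range_succ, ih, add_assoc]

private lemma split_pivot (f : ℕ → ℝ) (p n : ℕ) (h : p < n) :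
    ∑ j ∈ range n, f j
      = (∑ j ∈ range p, f j) + f p + ∑ j ∈ range (n - p - 1), f (p + 1 + j) := by
  obtain ⟨t, rfl⟩ : ∃ t, n = (p + 1) + t := ⟨n - p - 1, by omega⟩
  have ht : (p + 1) + t - p - 1 = t := by omega
  rw [ht, sum_range_add', sum_range_succ]

private lemma split_pivot1 (f : ℕ → ℝ) (m n : ℕ) (h1 : 1 ≤ m) (h2 : m ≤ n) :
    ∑ j ∈ range n, f j
      = (∑ j ∈ range (m-1), f j) + f (m-1) + ∑ j ∈ range (n - m), f (m + j) := by
  rw [split_pivot f (m-1) n (by omega)]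
  have e : ∑ j ∈ range (n-(m-1)-1), f (m-1+1+j) = ∑ j ∈ range (n-m), f (m+j) := by
    rw [show n-(m-1)-1 = n-m from by omega]
    exact Finset.sum_congr rfl fun j _ => by congr 1; omega
  rw [e]

private lemma split_pivot2 (f : ℕ → ℝ) (m n : ℕ) (h1 : 1 ≤ m) (h2 : m < n) :
    ∑ j ∈ range n, f j
      = (∑ j ∈ range (m-1), f j) + f (m-1) + f m + ∑ j ∈ range (n - m - 1), f (m + 1 + j) := by
  obtain ⟨a, ha⟩ : ∃ a, a = n - m - 1 := ⟨_, rfl⟩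
  rw [← ha, split_pivot1 f m n h1 h2.le, show n - m = a + 1 from by omega,
    sum_range_succ' (fun j => f (m + j)) a, Nat.add_zero]
  have e : ∑ j ∈ range a, f (m+(j+1)) = ∑ j ∈ range a, f (m+1+j) :=
    Finset.sum_congr rfl fun j _ => by congr 1; omega
  rw [e]
  ring

private lemma core : ∀ (k : ℕ) (D c : ℕ → ℝ),
    (∀ i j, i ≤ j → j < k → D j ≤ D i) →
    (∀ j, j < k → 0 ≤ D j) →
    (∀ i j, i ≤ j → j < k → c j ≤ c i) →
    (∀ i, i < k → 0 ≤ c i) →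
    (∀ ℓ, ℓ < k → ∑ i ∈ range (ℓ+1), c i ≤ ∑ i ∈ range (ℓ+1), D i) →
    ∃ x : ℕ → ℕ → ℝ,
      (∀ i j, 0 ≤ x i j) ∧
      (∀ i, i < k → ∑ j ∈ range k, x i j ≤ 1) ∧
      (∀ j, j < k → ∑ i ∈ range k, x i j ≤ 1) ∧
      (∀ i, i < k → c i = ∑ j ∈ range k, x i j * D j) := by
  intro k
  induction k with
  | zero =>
    intro D c _ _ _ _ _
    exact ⟨fun _ _ => 0, fun _ _ => le_refl 0, fun i hi => by omega, fun j hj => by omega,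
      fun i hi => by omega⟩
  | succ k ih =>
    intro D c hDa hD0 hca hc0 hpre
    by_cases hex : ∃ j, j < k + 1 ∧ D j ≤ c 0
    · -- some slot is no faster than c 0
      classical
      set m := Nat.find hex with hmdef
      have hm := Nat.find_spec hex
      rw [← hmdef] at hm
      have hmin : ∀ j, j < m → ¬(j < k + 1 ∧ D j ≤ c 0) := fun j hj => Nat.find_min hex hj
      by_cases hm0 : m = 0
      · -- c 0 = D 0 : put bidder 0 fully in slot 0 and recurse
        have hDm0 : D 0 ≤ c 0 := by have h := hm.2; rw [hm0] at h; exact h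
        have hc00 : c 0 ≤ D 0 := by
          have := hpre 0 (by omega)
          simpa using this
        have hcD : c 0 = D 0 := le_antisymm hc00 hDm0
        obtain ⟨x', hx0, hxr, hxc, hxe⟩ := ih (fun j => D (j+1)) (fun i => c (i+1))
          (fun i j hij hj => hDa (i+1) (j+1) (by omega) (by omega))
          (fun j hj => hD0 (j+1) (by omega))
          (fun i j hij hj => hca (i+1) (j+1) (by omega) (by omega))
          (fun i hi => hc0 (i+1) (by omega))
          (by
            intro L hL
            have h1 := hpre (L+1) (by omega)
            rw [sum_range_succ' c (L+1), sum_range_succ' D (L+1)] at h1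
            linarith)
        refine ⟨fun i j => if i = 0 then (if j = 0 then 1 else 0)
            else if j = 0 then 0 else x' (i-1) (j-1), ?_, ?_, ?_, ?_⟩
        · intro i j
          dsimp only
          split_ifs
          · exact zero_le_one
          · exact le_refl 0
          · exact le_refl 0
          · exact hx0 _ _
        · intro i hi
          dsimp only
          cases i with
          | zero =>
            have e : ∀ j ∈ range (k+1),
                (if (0:ℕ) = 0 then (if j = 0 then (1:ℝ) else 0)
                  else if j = 0 then 0 else x' (0-1) (j-1))
                  = if j = 0 then (fun _ => (1:ℝ)) j else 0 := by
              intro j _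
              rw [if_pos rfl]
            rw [Finset.sum_congr rfl e, Finset.sum_ite_eq' (range (k+1)) 0]
            rw [if_pos (mem_range.mpr (by omega))]
          | succ i' =>
            rw [sum_range_succ' (fun j => if i' + 1 = 0 then (if j = 0 then (1:ℝ) else 0)
              else if j = 0 then 0 else x' (i'+1-1) (j-1)) k]
            have e : ∀ j ∈ range k,
                (if i' + 1 = 0 then (if j + 1 = 0 then (1:ℝ) else 0)
                  else if j + 1 = 0 then 0 else x' (i'+1-1) (j+1-1)) = x' i' j := by
              intro j _
              rw [if_neg (Nat.succ_ne_zero i'), if_neg (Nat.succ_ne_zero j)]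
              simp only [Nat.add_sub_cancel]
            rw [Finset.sum_congr rfl e, if_neg (Nat.succ_ne_zero i'), if_pos rfl, add_zero]
            exact hxr i' (by omega)
        · intro j hj
          dsimp only
          rw [sum_range_succ' (fun i => if i = 0 then (if j = 0 then (1:ℝ) else 0)
            else if j = 0 then 0 else x' (i-1) (j-1)) k]
          cases j with
          | zero =>
            have e : ∀ i ∈ range k,
                (if i + 1 = 0 then (if (0:ℕ) = 0 then (1:ℝ) else 0)
                  else if (0:ℕ) = 0 then 0 else x' (i+1-1) (0-1)) = 0 := by
              intro i _
              rw [if_neg (Nat.succ_ne_zero i), if_pos rfl]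
            rw [Finset.sum_congr rfl e, Finset.sum_const, if_pos rfl, if_pos rfl]
            simp
          | succ j' =>
            have e : ∀ i ∈ range k,
                (if i + 1 = 0 then (if j' + 1 = 0 then (1:ℝ) else 0)
                  else if j' + 1 = 0 then 0 else x' (i+1-1) (j'+1-1)) = x' i j' := by
              intro i _
              rw [if_neg (Nat.succ_ne_zero i), if_neg (Nat.succ_ne_zero j')]
              simp only [Nat.add_sub_cancel]
            rw [Finset.sum_congr rfl e, if_pos rfl, if_neg (Nat.succ_ne_zero j'), add_zero]
            exact hxc j' (by omega)
        · intro i hi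
          dsimp only
          cases i with
          | zero =>
            have e : ∀ j ∈ range (k+1),
                (if (0:ℕ) = 0 then (if j = 0 then (1:ℝ) else 0)
                  else if j = 0 then 0 else x' (0-1) (j-1)) * D j
                  = if j = 0 then (fun t => D t) j else 0 := by
              intro j _
              rw [if_pos rfl]
              by_cases h : j = 0
              · rw [if_pos h, if_pos h, one_mul]
              · rw [if_neg h, if_neg h, zero_mul]
            rw [Finset.sum_congr rfl e, Finset.sum_ite_eq' (range (k+1)) 0,
              if_pos (mem_range.mpr (by omega))]
            exact hcD
          | succ i' =>
            rw [sum_range_succ' (fun j => (if i' + 1 = 0 then (if j = 0 then (1:ℝ) else 0)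
              else if j = 0 then 0 else x' (i'+1-1) (j-1)) * D j) k]
            have e : ∀ j ∈ range k,
                (if i' + 1 = 0 then (if j + 1 = 0 then (1:ℝ) else 0)
                  else if j + 1 = 0 then 0 else x' (i'+1-1) (j+1-1)) * D (j+1)
                  = x' i' j * D (j+1) := by
              intro j _
              rw [if_neg (Nat.succ_ne_zero i'), if_neg (Nat.succ_ne_zero j)]
              simp only [Nat.add_sub_cancel]
            rw [Finset.sum_congr rfl e, if_neg (Nat.succ_ne_zero i'), if_pos rfl, zero_mul,
              add_zero]
            exact hxe i' (by omega)
      · -- 1 ≤ m : split bidder 0 between slots m-1 and m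
        have hm1 : 1 ≤ m := by omega
        have hmk : m ≤ k := by omega
        have hDm : D m ≤ c 0 := hm.2
        have hDm1 : c 0 < D (m-1) := by
          have h := hmin (m-1) (by omega)
          by_contra hcon
          push_neg at hcon
          exact h ⟨by omega, hcon⟩
        have hden : 0 < D (m-1) - D m := by linarith
        set lam := (c 0 - D m) / (D (m-1) - D m) with hlamdef
        have hlam0 : 0 ≤ lam := div_nonneg (by linarith) (le_of_lt hden)
        have hlam1 : lam ≤ 1 := by rw [hlamdef, div_le_one hden]; linarith
        have hlamc : lam * (D (m-1) - D m) = c 0 - D m := div_mul_cancel₀ _ (ne_of_gt hden)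
        have hc0eq : lam * D (m-1) + (1 - lam) * D m = c 0 := by linear_combination hlamc
        have hE : (1 - lam) * D (m-1) + lam * D m = D (m-1) + D m - c 0 := by
          linear_combination -hlamc
        have hE1 : D (m-1) + D m - c 0 ≤ D (m-1) := by linarith
        have hE2 : D m ≤ D (m-1) + D m - c 0 := by linarith
        obtain ⟨x', hx0, hxr, hxc, hxe⟩ := ih
          (fun j => if j < m - 1 then D j else if j = m - 1 then D (m-1) + D m - c 0
            else D (j+1))
          (fun i => c (i+1))
          (by -- antitone
            intro i j hij hj
            by_cases hj1 : j < m - 1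
            · rw [if_pos hj1, if_pos (show i < m - 1 by omega)]
              exact hDa i j hij (by omega)
            · by_cases hj2 : j = m - 1
              · rw [if_neg hj1, if_pos hj2]
                by_cases hi1 : i < m - 1
                · rw [if_pos hi1]
                  exact le_trans hE1 (hDa i (m-1) (by omega) (by omega))
                · rw [if_neg hi1, if_pos (show i = m - 1 by omega)]
              · rw [if_neg hj1, if_neg hj2]
                by_cases hi1 : i < m - 1
                · rw [if_pos hi1]
                  exact hDa i (j+1) (by omega) (by omega)
                · by_cases hi2 : i = m - 1
                  · rw [if_neg hi1, if_pos hi2]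
                    exact le_trans (hDa m (j+1) (by omega) (by omega)) hE2
                  · rw [if_neg hi1, if_neg hi2]
                    exact hDa (i+1) (j+1) (by omega) (by omega))
          (by -- nonneg
            intro j hj
            split_ifs with h1 h2
            · exact hD0 j (by omega)
            · exact le_trans (hD0 m (by omega)) hE2
            · exact hD0 (j+1) (by omega))
          (fun i j hij hj => hca (i+1) (j+1) (by omega) (by omega))
          (fun i hi => hc0 (i+1) (by omega))
          (by -- prefix sums
            intro L hL
            by_cases hcase : L + 1 < m
            · apply Finset.sum_le_sum
              intro i hi
              simp only [mem_range] at hi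
              rw [if_pos (show i < m - 1 by omega)]
              calc c (i+1) ≤ c 0 := hca 0 (i+1) (by omega) (by omega)
                _ ≤ D (m-1) := le_of_lt hDm1
                _ ≤ D i := hDa i (m-1) (by omega) (by omega)
            · have hmL : m ≤ L + 1 := by omega
              have hsc : ∑ i ∈ range (L+2), c i
                  = (∑ i ∈ range (L+1), c (i+1)) + c 0 := sum_range_succ' c (L+1)
              have hsD := split_pivot2 D m (L+2) hm1 (by omega)
              have hsD' := split_pivot1
                (fun j => if j < m - 1 then D j else if j = m - 1 then D (m-1) + D m - c 0
                  else D (j+1)) m (L+1) hm1 hmL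
              beta_reduce at hsD'
              rw [if_neg (lt_irrefl (m-1)), if_pos rfl] at hsD'
              have e1 : ∑ j ∈ range (m-1),
                  (if j < m - 1 then D j else if j = m - 1 then D (m-1) + D m - c 0
                    else D (j+1)) = ∑ j ∈ range (m-1), D j := by
                refine Finset.sum_congr rfl fun j hj => ?_
                simp only [mem_range] at hj
                rw [if_pos hj]
              have e2 : ∑ j ∈ range (L+1-m),
                  (if m + j < m - 1 then D (m+j) else if m + j = m - 1 then D (m-1) + D m - c 0
                    else D (m+j+1)) = ∑ j ∈ range (L+1-m), D (m+1+j) := by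
                refine Finset.sum_congr rfl fun j hj => ?_
                rw [if_neg (by omega), if_neg (by omega)]
                congr 1
                omega
              rw [e1, e2] at hsD'
              have e3 : L + 2 - m - 1 = L + 1 - m := by omega
              rw [e3] at hsD
              have h2 := hpre (L+1) (by omega)
              rw [hsc, hsD] at h2
              rw [hsD']
              linarith)
        refine ⟨fun i j =>
            if i = 0 then (if j = m - 1 then lam else if j = m then 1 - lam else 0)
            else if j < m - 1 then x' (i-1) j
            else if j = m - 1 then (1 - lam) * x' (i-1) (m-1)
            else if j = m then lam * x' (i-1) (m-1)
            else x' (i-1) (j-1), ?_, ?_, ?_, ?_⟩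
        · intro i j
          dsimp only
          split_ifs
          · exact hlam0
          · linarith
          · exact le_refl 0
          · exact hx0 _ _
          · exact mul_nonneg (by linarith) (hx0 _ _)
          · exact mul_nonneg hlam0 (hx0 _ _)
          · exact hx0 _ _
        · -- row sums
          intro i hi
          dsimp only
          cases i with
          | zero =>
            have e : ∀ j ∈ range (k+1),
                (if (0:ℕ) = 0 then (if j = m - 1 then lam else if j = m then 1 - lam else 0)
                  else if j < m - 1 then x' (0-1) j
                  else if j = m - 1 then (1 - lam) * x' (0-1) (m-1)
                  else if j = m then lam * x' (0-1) (m-1)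
                  else x' (0-1) (j-1))
                  = (if j = m - 1 then (fun _ => lam) j else 0)
                    + (if j = m then (fun _ => 1 - lam) j else 0) := by
              intro j _
              rw [if_pos rfl]
              by_cases h1 : j = m - 1
              · rw [if_pos h1, if_pos h1, if_neg (by omega), add_zero]
              · rw [if_neg h1, if_neg h1, zero_add]
            rw [Finset.sum_congr rfl e, Finset.sum_add_distrib,
              Finset.sum_ite_eq' (range (k+1)) (m-1), Finset.sum_ite_eq' (range (k+1)) m,
              if_pos (mem_range.mpr (by omega)), if_pos (mem_range.mpr (by omega))]
            linarith
          | succ i' =>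
            have e : ∀ j, (if i' + 1 = 0 then (if j = m - 1 then lam else if j = m then 1 - lam else 0)
                  else if j < m - 1 then x' (i'+1-1) j
                  else if j = m - 1 then (1 - lam) * x' (i'+1-1) (m-1)
                  else if j = m then lam * x' (i'+1-1) (m-1)
                  else x' (i'+1-1) (j-1))
                = (if j < m - 1 then x' i' j
                  else if j = m - 1 then (1 - lam) * x' i' (m-1)
                  else if j = m then lam * x' i' (m-1)
                  else x' i' (j-1)) := by
              intro j
              rw [if_neg (Nat.succ_ne_zero i')]
              simp only [Nat.add_sub_cancel]
            rw [Finset.sum_congr rfl (fun j _ => e j)]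
            rw [split_pivot2 (fun j => if j < m - 1 then x' i' j
              else if j = m - 1 then (1 - lam) * x' i' (m-1)
              else if j = m then lam * x' i' (m-1)
              else x' i' (j-1)) m (k+1) hm1 (by omega)]
            beta_reduce
            have e1 : ∑ j ∈ range (m-1), (if j < m - 1 then x' i' j
                else if j = m - 1 then (1 - lam) * x' i' (m-1)
                else if j = m then lam * x' i' (m-1)
                else x' i' (j-1)) = ∑ j ∈ range (m-1), x' i' j := by
              refine Finset.sum_congr rfl fun j hj => ?_
              simp only [mem_range] at hj
              rw [if_pos hj]
            have e2 : ∑ j ∈ range (k+1-m-1), (if m + 1 + j < m - 1 then x' i' (m+1+j)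
                else if m + 1 + j = m - 1 then (1 - lam) * x' i' (m-1)
                else if m + 1 + j = m then lam * x' i' (m-1)
                else x' i' (m+1+j-1)) = ∑ j ∈ range (k-m), x' i' (m+j) := by
              rw [show k + 1 - m - 1 = k - m from by omega]
              refine Finset.sum_congr rfl fun j hj => ?_
              rw [if_neg (by omega), if_neg (by omega), if_neg (by omega)]
              congr 1
              omega
            rw [e1, e2, if_neg (lt_irrefl (m-1)), if_pos rfl,
              if_neg (show ¬ m < m - 1 by omega), if_neg (show ¬ m = m - 1 by omega), if_pos rfl]
            have hrow := hxr i' (by omega)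
            rw [split_pivot1 (x' i') m k hm1 hmk] at hrow
            beta_reduce at hrow
            linarith
        · -- column sums
          intro j hj
          dsimp only
          rw [sum_range_succ' (fun i =>
            if i = 0 then (if j = m - 1 then lam else if j = m then 1 - lam else 0)
            else if j < m - 1 then x' (i-1) j
            else if j = m - 1 then (1 - lam) * x' (i-1) (m-1)
            else if j = m then lam * x' (i-1) (m-1)
            else x' (i-1) (j-1)) k]
          have hS0 : (0:ℝ) ≤ ∑ i ∈ range k, x' i (m-1) :=
            Finset.sum_nonneg fun i _ => hx0 i (m-1)
          have hS1 : ∑ i ∈ range k, x' i (m-1) ≤ 1 := hxc (m-1) (by omega)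
          by_cases hj1 : j < m - 1
          · have e : ∀ i ∈ range k,
                (if i + 1 = 0 then (if j = m - 1 then lam else if j = m then 1 - lam else 0)
                  else if j < m - 1 then x' (i+1-1) j
                  else if j = m - 1 then (1 - lam) * x' (i+1-1) (m-1)
                  else if j = m then lam * x' (i+1-1) (m-1)
                  else x' (i+1-1) (j-1)) = x' i j := by
              intro i _
              rw [if_neg (Nat.succ_ne_zero i), if_pos hj1]
              simp only [Nat.add_sub_cancel]
            rw [Finset.sum_congr rfl e, if_pos rfl, if_neg (by omega), if_neg (by omega),
              add_zero]
            exact hxc j (by omega)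
          · by_cases hj2 : j = m - 1
            · have e : ∀ i ∈ range k,
                  (if i + 1 = 0 then (if j = m - 1 then lam else if j = m then 1 - lam else 0)
                    else if j < m - 1 then x' (i+1-1) j
                    else if j = m - 1 then (1 - lam) * x' (i+1-1) (m-1)
                    else if j = m then lam * x' (i+1-1) (m-1)
                    else x' (i+1-1) (j-1)) = (1 - lam) * x' i (m-1) := by
                intro i _
                rw [if_neg (Nat.succ_ne_zero i), if_neg hj1, if_pos hj2]
                simp only [Nat.add_sub_cancel]
              rw [Finset.sum_congr rfl e, if_pos rfl, if_pos hj2, ← Finset.mul_sum]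
              nlinarith [mul_nonneg (show (0:ℝ) ≤ 1 - lam by linarith)
                (show (0:ℝ) ≤ 1 - ∑ i ∈ range k, x' i (m-1) by linarith)]
            · by_cases hj3 : j = m
              · have e : ∀ i ∈ range k,
                    (if i + 1 = 0 then (if j = m - 1 then lam else if j = m then 1 - lam else 0)
                      else if j < m - 1 then x' (i+1-1) j
                      else if j = m - 1 then (1 - lam) * x' (i+1-1) (m-1)
                      else if j = m then lam * x' (i+1-1) (m-1)
                      else x' (i+1-1) (j-1)) = lam * x' i (m-1) := by
                  intro i _
                  rw [if_neg (Nat.succ_ne_zero i), if_neg hj1, if_neg hj2, if_pos hj3]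
                  simp only [Nat.add_sub_cancel]
                rw [Finset.sum_congr rfl e, if_pos rfl, if_neg hj2, if_pos hj3, ← Finset.mul_sum]
                nlinarith [mul_nonneg hlam0
                  (show (0:ℝ) ≤ 1 - ∑ i ∈ range k, x' i (m-1) by linarith)]
              · have e : ∀ i ∈ range k,
                    (if i + 1 = 0 then (if j = m - 1 then lam else if j = m then 1 - lam else 0)
                      else if j < m - 1 then x' (i+1-1) j
                      else if j = m - 1 then (1 - lam) * x' (i+1-1) (m-1)
                      else if j = m then lam * x' (i+1-1) (m-1)
                      else x' (i+1-1) (j-1)) = x' i (j-1) := by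
                  intro i _
                  rw [if_neg (Nat.succ_ne_zero i), if_neg hj1, if_neg hj2, if_neg hj3]
                  simp only [Nat.add_sub_cancel]
                rw [Finset.sum_congr rfl e, if_pos rfl, if_neg hj2, if_neg hj3, add_zero]
                exact hxc (j-1) (by omega)
        · -- clicks
          intro i hi
          dsimp only
          cases i with
          | zero =>
            have e : ∀ j ∈ range (k+1),
                (if (0:ℕ) = 0 then (if j = m - 1 then lam else if j = m then 1 - lam else 0)
                  else if j < m - 1 then x' (0-1) j
                  else if j = m - 1 then (1 - lam) * x' (0-1) (m-1)
                  else if j = m then lam * x' (0-1) (m-1)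
                  else x' (0-1) (j-1)) * D j
                  = (if j = m - 1 then (fun t => lam * D t) j else 0)
                    + (if j = m then (fun t => (1 - lam) * D t) j else 0) := by
              intro j _
              rw [if_pos rfl]
              by_cases h1 : j = m - 1
              · rw [if_pos h1, if_pos h1, if_neg (by omega), add_zero]
              · rw [if_neg h1, if_neg h1, zero_add]
                by_cases h2 : j = m
                · rw [if_pos h2, if_pos h2]
                · rw [if_neg h2, if_neg h2, zero_mul]
            rw [Finset.sum_congr rfl e, Finset.sum_add_distrib,
              Finset.sum_ite_eq' (range (k+1)) (m-1), Finset.sum_ite_eq' (range (k+1)) m,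
              if_pos (mem_range.mpr (by omega)), if_pos (mem_range.mpr (by omega))]
            exact hc0eq.symm
          | succ i' =>
            have e : ∀ j, (if i' + 1 = 0 then (if j = m - 1 then lam else if j = m then 1 - lam else 0)
                  else if j < m - 1 then x' (i'+1-1) j
                  else if j = m - 1 then (1 - lam) * x' (i'+1-1) (m-1)
                  else if j = m then lam * x' (i'+1-1) (m-1)
                  else x' (i'+1-1) (j-1)) * D j
                = (if j < m - 1 then x' i' j
                  else if j = m - 1 then (1 - lam) * x' i' (m-1)
                  else if j = m then lam * x' i' (m-1)
                  else x' i' (j-1)) * D j := by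
              intro j
              rw [if_neg (Nat.succ_ne_zero i')]
              simp only [Nat.add_sub_cancel]
            rw [Finset.sum_congr rfl (fun j _ => e j)]
            rw [split_pivot2 (fun j => (if j < m - 1 then x' i' j
              else if j = m - 1 then (1 - lam) * x' i' (m-1)
              else if j = m then lam * x' i' (m-1)
              else x' i' (j-1)) * D j) m (k+1) hm1 (by omega)]
            beta_reduce
            have e1 : ∑ j ∈ range (m-1), (if j < m - 1 then x' i' j
                else if j = m - 1 then (1 - lam) * x' i' (m-1)
                else if j = m then lam * x' i' (m-1)
                else x' i' (j-1)) * D j = ∑ j ∈ range (m-1), x' i' j * D j := by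
              refine Finset.sum_congr rfl fun j hj => ?_
              simp only [mem_range] at hj
              rw [if_pos hj]
            have e2 : ∑ j ∈ range (k+1-m-1), (if m + 1 + j < m - 1 then x' i' (m+1+j)
                else if m + 1 + j = m - 1 then (1 - lam) * x' i' (m-1)
                else if m + 1 + j = m then lam * x' i' (m-1)
                else x' i' (m+1+j-1)) * D (m+1+j)
                = ∑ j ∈ range (k-m), x' i' (m+j) * D (m+1+j) := by
              rw [show k + 1 - m - 1 = k - m from by omega]
              refine Finset.sum_congr rfl fun j hj => ?_
              rw [if_neg (by omega), if_neg (by omega), if_neg (by omega)]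
              congr 2
              omega
            rw [e1, e2, if_neg (lt_irrefl (m-1)), if_pos rfl,
              if_neg (show ¬ m < m - 1 by omega), if_neg (show ¬ m = m - 1 by omega), if_pos rfl]
            have hclk := hxe i' (by omega)
            rw [split_pivot1 (fun j => x' i' j * (if j < m - 1 then D j
              else if j = m - 1 then D (m-1) + D m - c 0 else D (j+1))) m k hm1 hmk] at hclk
            beta_reduce at hclk
            rw [if_neg (lt_irrefl (m-1)), if_pos rfl] at hclk
            have e3 : ∑ j ∈ range (m-1), x' i' j * (if j < m - 1 then D j
                else if j = m - 1 then D (m-1) + D m - c 0 else D (j+1))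
                = ∑ j ∈ range (m-1), x' i' j * D j := by
              refine Finset.sum_congr rfl fun j hj => ?_
              simp only [mem_range] at hj
              rw [if_pos hj]
            have e4 : ∑ j ∈ range (k-m), x' i' (m+j) * (if m + j < m - 1 then D (m+j)
                else if m + j = m - 1 then D (m-1) + D m - c 0 else D (m+j+1))
                = ∑ j ∈ range (k-m), x' i' (m+j) * D (m+1+j) := by
              refine Finset.sum_congr rfl fun j hj => ?_
              rw [if_neg (by omega), if_neg (by omega)]
              congr 2
              omega
            rw [e3, e4] at hclk
            rw [hclk]
            linear_combination (-(x' i' (m-1))) * hE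
    · -- all slots strictly faster than c 0 : diagonal schedule
      push_neg at hex
      have hlt : ∀ j, j < k + 1 → c 0 < D j := hex
      refine ⟨fun i j => if i = j then (if i < k + 1 then c i / D i else 0) else 0,
        ?_, ?_, ?_, ?_⟩
      · intro i j
        dsimp only
        split_ifs with h1 h2
        · exact div_nonneg (hc0 i h2) (le_of_lt (lt_of_le_of_lt (hc0 0 (by omega)) (hlt i h2)))
        · exact le_refl 0
        · exact le_refl 0
      · intro i hi
        rw [Finset.sum_ite_eq (range (k+1)) i]
        simp only [mem_range, hi, if_pos]
        have hDi : 0 < D i := lt_of_le_of_lt (hc0 0 (by omega)) (hlt i hi)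
        rw [div_le_one hDi]
        exact le_of_lt (lt_of_le_of_lt (hca 0 i (by omega) hi) (hlt i hi))
      · intro j hj
        rw [Finset.sum_ite_eq' (range (k+1)) j]
        simp only [mem_range, hj, if_pos]
        have hDj : 0 < D j := lt_of_le_of_lt (hc0 0 (by omega)) (hlt j hj)
        rw [div_le_one hDj]
        exact le_of_lt (lt_of_le_of_lt (hca 0 j (by omega) hj) (hlt j hj))
      · intro i hi
        have : ∀ j ∈ range (k+1),
            (if i = j then (if i < k + 1 then c i / D i else 0) else 0) * D j
              = if i = j then (c i / D i) * D j else 0 := by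
          intro j hj
          simp only [mem_range] at hj
          by_cases h1 : i = j
          · subst h1
            rw [if_pos rfl, if_pos rfl, if_pos hj]
          · rw [if_neg h1, if_neg h1, zero_mul]
        rw [Finset.sum_congr rfl this, Finset.sum_ite_eq (range (k+1)) i]
        simp only [mem_range, hi, if_pos]
        have hDi : D i ≠ 0 :=
          ne_of_gt (lt_of_le_of_lt (hc0 0 (by omega)) (hlt i hi))
        rw [div_mul_cancel₀ _ hDi]

private lemma sum_Iic_eq_range {k : ℕ} (f : Fin k → ℝ) (ℓ : Fin k) :
    ∑ i ∈ Finset.Iic ℓ, f i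
      = ∑ i ∈ Finset.range (ℓ.val + 1), (if h : i < k then f ⟨i, h⟩ else 0) := by
  classical
  have hk := ℓ.isLt
  refine Finset.sum_nbij' (fun (a : Fin k) => (a : ℕ))
    (fun b => if h : b < k then (⟨b, h⟩ : Fin k) else ℓ) ?_ ?_ ?_ ?_ ?_
  · intro a ha
    simp only [Finset.mem_Iic] at ha
    simp only [Finset.mem_range]
    exact Nat.lt_succ_of_le (Fin.le_def.mp ha)
  · intro b hb
    simp only [Finset.mem_range] at hb
    have hbk : b < k := by omega
    simp only [dif_pos hbk, Finset.mem_Iic]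
    exact Fin.mk_le_mk.mpr (by omega)
  · intro a _
    simp [a.isLt]
  · intro b hb
    simp only [Finset.mem_range] at hb
    have hbk : b < k := by omega
    simp [hbk]
  · intro a _
    simp [a.isLt]


/-- A click allocation `c₁ ≥ ... ≥ c_k ≥ 0` can be feasibly scheduled on slots with
click rates `D₁ > ... > D_k > 0` iff every prefix sum of `c` is at most the
corresponding prefix sum of `D`. -/
theorem stmt0 {k : ℕ} (D c : Fin k → ℝ)
    (hD : StrictAnti D) (hDpos : ∀ j, 0 < D j)
    (hc : Antitone c) (hcnonneg : ∀ i, 0 ≤ c i) :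
    FeasibleAllocation D c ↔
      ∀ ℓ : Fin k, ∑ i ∈ Finset.Iic ℓ, c i ≤ ∑ i ∈ Finset.Iic ℓ, D i := by
  constructor
  · rintro ⟨x, hx0, hxr, hxc, hxe⟩ ℓ
    set s : Fin k → ℝ := fun j => ∑ i ∈ Finset.Iic ℓ, x i j with hsdef
    have hs1 : ∀ j, (0:ℝ) ≤ s j := fun j => Finset.sum_nonneg fun i _ => hx0 i j
    have hs2 : ∀ j, s j ≤ 1 := fun j =>
      le_trans (Finset.sum_le_sum_of_subset_of_nonneg (Finset.subset_univ _)
        (fun i _ _ => hx0 i j)) (hxc j)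
    have hswap : ∑ i ∈ Finset.Iic ℓ, c i = ∑ j : Fin k, s j * D j := by
      rw [Finset.sum_congr rfl (fun i (_ : i ∈ Finset.Iic ℓ) => hxe i), Finset.sum_comm]
      exact Finset.sum_congr rfl fun j _ => (Finset.sum_mul _ _ _).symm
    have hcard : ∑ j : Fin k, s j ≤ ((Finset.Iic ℓ).card : ℝ) := by
      rw [Finset.sum_comm]
      calc ∑ i ∈ Finset.Iic ℓ, ∑ j : Fin k, x i j
          ≤ ∑ _i ∈ Finset.Iic ℓ, (1:ℝ) := Finset.sum_le_sum fun i _ => hxr i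
        _ = ((Finset.Iic ℓ).card : ℝ) := by rw [Finset.sum_const, nsmul_eq_mul, mul_one]
    have hsplit : ∑ j : Fin k, s j * D j
        = ∑ j ∈ Finset.Iic ℓ, s j * D j + ∑ j ∈ (Finset.Iic ℓ)ᶜ, s j * D j :=
      (Finset.sum_add_sum_compl _ _).symm
    have hsplitS : (∑ j ∈ Finset.Iic ℓ, s j) + ∑ j ∈ (Finset.Iic ℓ)ᶜ, s j
        = ∑ j : Fin k, s j := Finset.sum_add_sum_compl _ _
    have h1 : ∑ j ∈ Finset.Iic ℓ, s j * D j
        ≤ ∑ j ∈ Finset.Iic ℓ, (D j + (s j - 1) * D ℓ) := by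
      refine Finset.sum_le_sum fun j hj => ?_
      have hDj : D ℓ ≤ D j := hD.antitone (Finset.mem_Iic.mp hj)
      nlinarith [mul_nonneg (sub_nonneg.mpr (hs2 j)) (sub_nonneg.mpr hDj)]
    have e1 : ∑ j ∈ Finset.Iic ℓ, (D j + (s j - 1) * D ℓ)
        = ∑ j ∈ Finset.Iic ℓ, D j
          + ((∑ j ∈ Finset.Iic ℓ, s j) - ((Finset.Iic ℓ).card : ℝ)) * D ℓ := by
      rw [Finset.sum_add_distrib, ← Finset.sum_mul, Finset.sum_sub_distrib,
        Finset.sum_const, nsmul_eq_mul, mul_one]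
    have h2 : ∑ j ∈ (Finset.Iic ℓ)ᶜ, s j * D j
        ≤ (∑ j ∈ (Finset.Iic ℓ)ᶜ, s j) * D ℓ := by
      rw [Finset.sum_mul]
      refine Finset.sum_le_sum fun j hj => ?_
      have hj' : ℓ ≤ j := by
        rw [Finset.mem_compl, Finset.mem_Iic] at hj
        exact le_of_not_ge hj
      exact mul_le_mul_of_nonneg_left (hD.antitone hj') (hs1 j)
    have hprod : ((∑ j ∈ Finset.Iic ℓ, s j) - ((Finset.Iic ℓ).card : ℝ)) * D ℓ
        + (∑ j ∈ (Finset.Iic ℓ)ᶜ, s j) * D ℓ ≤ 0 := by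
      have hfac : (∑ j ∈ Finset.Iic ℓ, s j) - ((Finset.Iic ℓ).card : ℝ)
          + ∑ j ∈ (Finset.Iic ℓ)ᶜ, s j ≤ 0 := by
        linarith [hsplitS, hcard]
      calc ((∑ j ∈ Finset.Iic ℓ, s j) - ((Finset.Iic ℓ).card : ℝ)) * D ℓ
          + (∑ j ∈ (Finset.Iic ℓ)ᶜ, s j) * D ℓ
          = ((∑ j ∈ Finset.Iic ℓ, s j) - ((Finset.Iic ℓ).card : ℝ)
              + ∑ j ∈ (Finset.Iic ℓ)ᶜ, s j) * D ℓ := by ring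
        _ ≤ 0 := mul_nonpos_of_nonpos_of_nonneg hfac (hDpos ℓ).le
    linarith [hswap, hsplit, h1, e1, h2, hprod]
  · intro hpre
    obtain ⟨x, hx0, hxr, hxc, hxe⟩ := core k
      (fun n => if h : n < k then D ⟨n, h⟩ else 0)
      (fun n => if h : n < k then c ⟨n, h⟩ else 0)
      (by
        intro i j hij hj
        beta_reduce
        rw [dif_pos hj, dif_pos (lt_of_le_of_lt hij hj)]
        exact hD.antitone (Fin.mk_le_mk.mpr hij))
      (by
        intro j hj
        beta_reduce
        rw [dif_pos hj]
        exact (hDpos _).le)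
      (by
        intro i j hij hj
        beta_reduce
        rw [dif_pos hj, dif_pos (lt_of_le_of_lt hij hj)]
        exact hc (Fin.mk_le_mk.mpr hij))
      (by
        intro i hi
        beta_reduce
        rw [dif_pos hi]
        exact hcnonneg _)
      (by
        intro L hL
        have h := hpre ⟨L, hL⟩
        rw [sum_Iic_eq_range c ⟨L, hL⟩, sum_Iic_eq_range D ⟨L, hL⟩] at h
        exact h)
    refine ⟨fun i j => x i.val j.val, fun i j => hx0 i.val j.val, ?_, ?_, ?_⟩
    · intro i
      rw [Fin.sum_univ_eq_sum_range (fun n => x i.val n) k]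
      exact hxr i.val i.isLt
    · intro j
      rw [Fin.sum_univ_eq_sum_range (fun n => x n j.val) k]
      exact hxc j.val j.isLt
    · intro i
      have h := hxe i.val i.isLt
      rw [dif_pos i.isLt] at h
      simp only [Fin.eta] at h
      have e : ∀ j : Fin k, x i.val j.val * D j
          = (fun n => x i.val n * (if h : n < k then D ⟨n, h⟩ else 0)) j.val := by
        intro j
        simp [j.isLt]
      rw [Finset.sum_congr rfl (fun j _ => e j),
        Fin.sum_univ_eq_sum_range (fun n => x i.val n * (if h : n < k then D ⟨n, h⟩ else 0)) k]
      exact h
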